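/- Let a ∈ [0, ∞) and q ∈ [1, ∞] with a < q. Then the set of elements f of the Banach space ℓ^q whose underlying sequence belongs to ℓ^p for every real p with a < p < ∞ (i.e. f ∈ ⋂_{p>a} ℓ^p) is a meager subset of ℓ^q. -/

import Mathlib

open scoped ENNReal

/-- Let `a ∈ [0, ∞)` and `q ∈ [1, ∞]` with `a < q`. The set of elements
of the Banach space `ℓ^q` whose underlying sequence belongs to `ℓ^p` for every real
`p > a` is a meager subset of `ℓ^q`: it is contained in a countable union of closed sets
with empty interior. -/
theorem inter_ellP_meager_in_ellQ (a : ℝ) (q : ℝ≥0∞) [Fact (1 ≤ q)]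
    (ha : 0 ≤ a) (haq : ENNReal.ofReal a < q) :
    ∃ S : ℕ → Set (lp (fun _ : ℕ => ℂ) q),
      (∀ n, IsClosed (S n) ∧ interior (S n) = ∅) ∧
      {f : lp (fun _ : ℕ => ℂ) q |
          ∀ p : ℝ, a < p → Summable fun n : ℕ => ‖(f : ∀ _ : ℕ, ℂ) n‖ ^ p}
        ⊆ ⋃ n, S n := by
  -- choose an exponent `p₀` with `a < p₀` and `ofReal p₀ < q`
  obtain ⟨p₀, hap₀, hp₀q⟩ : ∃ p₀ : ℝ, a < p₀ ∧ ENNReal.ofReal p₀ < q := by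
    rcases eq_or_ne q ⊤ with rfl | hq
    · exact ⟨a + 1, by linarith, ENNReal.ofReal_lt_top⟩
    · have haq' : a < q.toReal := (ENNReal.ofReal_lt_iff_lt_toReal ha hq).1 haq
      exact ⟨(a + q.toReal) / 2, by linarith,
        (ENNReal.ofReal_lt_iff_lt_toReal (by linarith) hq).2 (by linarith)⟩
  have hp₀ : 0 < p₀ := lt_of_le_of_lt ha hap₀
  -- continuity of coordinate evaluations
  have hcont : ∀ n : ℕ, Continuous fun f : lp (fun _ : ℕ => ℂ) q => (f : ∀ _ : ℕ, ℂ) n := by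
    intro n
    exact (continuous_apply n).comp (lp.uniformContinuous_coe (p := q)).continuous
  refine ⟨fun k => {f | ∀ F : Finset ℕ, ∑ n ∈ F, ‖(f : ∀ _ : ℕ, ℂ) n‖ ^ p₀ ≤ k},
    fun k => ⟨?_, ?_⟩, ?_⟩
  · -- closedness
    show IsClosed {f : lp (fun _ : ℕ => ℂ) q | ∀ F : Finset ℕ,
        ∑ n ∈ F, ‖(f : ∀ _ : ℕ, ℂ) n‖ ^ p₀ ≤ k}
    have : {f : lp (fun _ : ℕ => ℂ) q | ∀ F : Finset ℕ,
        ∑ n ∈ F, ‖(f : ∀ _ : ℕ, ℂ) n‖ ^ p₀ ≤ k}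
        = ⋂ F : Finset ℕ, {f : lp (fun _ : ℕ => ℂ) q |
            ∑ n ∈ F, ‖(f : ∀ _ : ℕ, ℂ) n‖ ^ p₀ ≤ k} := by
      ext f; simp [Set.mem_iInter]
    rw [this]
    refine isClosed_iInter fun F => isClosed_le ?_ continuous_const
    exact continuous_finset_sum F fun n _ =>
      ((hcont n).norm).rpow_const fun x => Or.inr hp₀.le
  · -- empty interior
    rw [Set.eq_empty_iff_forall_notMem]
    intro f hf
    obtain ⟨ε, hε, hball⟩ := Metric.mem_nhds_iff.1 (mem_interior_iff_mem_nhds.1 hf)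
    -- choose `N` and `δ`
    obtain ⟨N, δ, hδ, hkNδ, hsmall⟩ : ∃ (N : ℕ) (δ : ℝ), 0 < δ ∧ (k : ℝ) < N * δ ^ p₀ ∧
        ∀ h : lp (fun _ : ℕ => ℂ) q, (∀ n, ‖(h : ∀ _ : ℕ, ℂ) n‖ ≤ 2 * δ) →
          (∀ n, N ≤ n → (h : ∀ _ : ℕ, ℂ) n = 0) → ‖h‖ < ε := by
      rcases eq_or_ne q ⊤ with rfl | hq
      · -- `q = ∞`
        set δ := ε / 3 with hδdef
        have hδ : 0 < δ := by positivity
        have hδp : 0 < δ ^ p₀ := Real.rpow_pos_of_pos hδ _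
        obtain ⟨N, hN⟩ := exists_nat_gt ((k : ℝ) / δ ^ p₀)
        refine ⟨N, δ, hδ, ?_, ?_⟩
        · rwa [div_lt_iff₀ hδp] at hN
        · intro h hbd _
          have : ‖h‖ ≤ 2 * δ := lp.norm_le_of_forall_le (by positivity) hbd
          have h23 : 2 * δ < ε := by rw [hδdef]; linarith
          linarith
      · -- `q < ∞`
        set qr := q.toReal with hqr
        have hqr0 : 0 < qr := ENNReal.toReal_pos (by
          have : (1 : ℝ≥0∞) ≤ q := Fact.out
          exact fun h => by simp [h] at this) hq
        have hp₀qr : p₀ < qr := (ENNReal.ofReal_lt_iff_lt_toReal hp₀.le hq).1 hp₀q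
        set θ := 1 - p₀ / qr with hθdef
        have hθ : 0 < θ := by
          have : p₀ / qr < 1 := (div_lt_one hqr0).2 hp₀qr
          simp [hθdef]; linarith
        set c := ε / 4 with hcdef
        have hc : 0 < c := by positivity
        have hcp : 0 < c ^ p₀ := Real.rpow_pos_of_pos hc _
        set r := max 1 ((((k : ℝ) + 1) / c ^ p₀) ^ θ⁻¹) with hrdef
        have hr1 : (1 : ℝ) ≤ r := le_max_left _ _
        set N := ⌈r⌉₊ with hNdef
        have hN1 : 1 ≤ N := by
          rw [hNdef]; exact Nat.one_le_iff_ne_zero.2 (by positivity)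
        have hNr : r ≤ (N : ℝ) := Nat.le_ceil r
        have hNpos : (0 : ℝ) < N := lt_of_lt_of_le (by linarith) hNr
        set δ := c * (N : ℝ) ^ (-(1 / qr)) with hδdef
        have hNp : (0 : ℝ) < (N : ℝ) ^ (-(1 / qr)) := Real.rpow_pos_of_pos hNpos _
        have hδ : 0 < δ := by positivity
        -- key computation : N * δ ^ p₀ = c ^ p₀ * N ^ θ
        have hx : (N : ℝ) * ((N : ℝ) ^ (-(p₀ / qr))) = (N : ℝ) ^ θ := by
          rw [hθdef, show (1 : ℝ) - p₀ / qr = 1 + -(p₀ / qr) by ring,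
            Real.rpow_add hNpos, Real.rpow_one]
        have hkey : (N : ℝ) * δ ^ p₀ = c ^ p₀ * (N : ℝ) ^ θ := by
          rw [hδdef, Real.mul_rpow hc.le hNp.le, ← Real.rpow_mul hNpos.le,
            show -(1 / qr) * p₀ = -(p₀ / qr) by ring, ← hx]
          ring
        refine ⟨N, δ, hδ, ?_, ?_⟩
        · -- k < N * δ ^ p₀
          have hbase : (0 : ℝ) ≤ ((k : ℝ) + 1) / c ^ p₀ := by positivity
          have h1 : (((k : ℝ) + 1) / c ^ p₀) ^ θ⁻¹ ≤ r := le_max_right _ _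
          have h2 : ((((k : ℝ) + 1) / c ^ p₀) ^ θ⁻¹) ^ θ ≤ (N : ℝ) ^ θ :=
            Real.rpow_le_rpow (Real.rpow_nonneg hbase _) (h1.trans hNr) hθ.le
          rw [Real.rpow_inv_rpow hbase hθ.ne'] at h2
          have h3 : (k : ℝ) + 1 ≤ c ^ p₀ * (N : ℝ) ^ θ := by
            rw [div_le_iff₀ hcp] at h2; linarith [h2]
          rw [hkey]; linarith
        · -- norm bound
          intro h hbd hsupp
          have hnn : ∀ n, (0 : ℝ) ≤ ‖(h : ∀ _ : ℕ, ℂ) n‖ ^ qr := fun n =>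
            Real.rpow_nonneg (norm_nonneg _) _
          have htsum : ∑' n, ‖(h : ∀ _ : ℕ, ℂ) n‖ ^ qr
              = ∑ n ∈ Finset.range N, ‖(h : ∀ _ : ℕ, ℂ) n‖ ^ qr := by
            refine tsum_eq_sum fun n hn => ?_
            rw [hsupp n (by simpa using hn)]
            simp [Real.zero_rpow hqr0.ne']
          have hsum : ∑ n ∈ Finset.range N, ‖(h : ∀ _ : ℕ, ℂ) n‖ ^ qr
              ≤ (N : ℝ) * (2 * δ) ^ qr := by
            calc ∑ n ∈ Finset.range N, ‖(h : ∀ _ : ℕ, ℂ) n‖ ^ qr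
                ≤ ∑ _n ∈ Finset.range N, (2 * δ) ^ qr :=
                  Finset.sum_le_sum fun n _ =>
                    Real.rpow_le_rpow (norm_nonneg _) (hbd n) hqr0.le
              _ = (N : ℝ) * (2 * δ) ^ qr := by
                  simp [Finset.sum_const, nsmul_eq_mul]
          have hcomp : (N : ℝ) * (2 * δ) ^ qr = (2 * c) ^ qr := by
            rw [hδdef, show 2 * (c * (N:ℝ) ^ (-(1/qr))) = (2 * c) * (N:ℝ) ^ (-(1/qr)) by ring,
              Real.mul_rpow (by positivity) hNp.le, ← Real.rpow_mul hNpos.le,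
              show -(1 / qr) * qr = -1 by field_simp, Real.rpow_neg_one]
            field_simp
          have h2c : 2 * c = ε / 2 := by rw [hcdef]; ring
          have hle : ‖h‖ ≤ ε / 2 := by
            refine lp.norm_le_of_tsum_le hqr0 (by positivity) ?_
            rw [htsum, ← h2c]
            exact hsum.trans_eq hcomp
          linarith
    -- build the perturbation `h`
    set fc : ℕ → ℂ := (f : ∀ _ : ℕ, ℂ) with hfc
    set h : ℕ → ℂ := fun n =>
      if n < N then (if δ ≤ ‖fc n‖ then 0 else (δ : ℂ) - fc n) else 0 with hhdef
    have hδnorm : ‖(δ : ℂ)‖ = δ := by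
      rw [Complex.norm_real, Real.norm_eq_abs, abs_of_pos hδ]
    have hbd : ∀ n, ‖h n‖ ≤ 2 * δ := by
      intro n
      rw [hhdef]
      dsimp only
      split_ifs with h1 h2
      · simp; linarith
      · calc ‖(δ : ℂ) - fc n‖ ≤ ‖(δ : ℂ)‖ + ‖fc n‖ := norm_sub_le _ _
          _ ≤ δ + δ := by rw [hδnorm]; push_neg at h2; exact add_le_add le_rfl h2.le
          _ = 2 * δ := by ring
      · simp; linarith
    have hsupp : ∀ n, N ≤ n → h n = 0 := by
      intro n hn
      rw [hhdef]; exact if_neg (not_lt.2 hn)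
    have hmem : Memℓp h q := by
      refine Memℓp.of_exponent_ge (memℓp_zero ?_) (zero_le (a := q))
      exact (Set.finite_Iio N).subset fun n hn => by
        by_contra hlt
        exact hn (hsupp n (not_lt.1 hlt))
    set hl : lp (fun _ : ℕ => ℂ) q := ⟨h, hmem⟩ with hhl
    set g : lp (fun _ : ℕ => ℂ) q := f + hl with hgdef
    have hgco : ∀ n, (g : ∀ _ : ℕ, ℂ) n = fc n + h n := fun n => rfl
    have hdist : dist g f < ε := by
      have hgf : g - f = hl := by rw [hgdef]; abel
      rw [dist_eq_norm, hgf]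
      exact hsmall hl hbd hsupp
    have hgmem : g ∈ {f : lp (fun _ : ℕ => ℂ) q | ∀ F : Finset ℕ,
        ∑ n ∈ F, ‖(f : ∀ _ : ℕ, ℂ) n‖ ^ p₀ ≤ k} := hball (Metric.mem_ball.2 hdist)
    have hlow : ∀ n < N, δ ≤ ‖(g : ∀ _ : ℕ, ℂ) n‖ := by
      intro n hn
      rw [hgco n, hhdef]
      dsimp only
      rw [if_pos hn]
      split_ifs with h1
      · simpa using h1
      · have heq : fc n + ((δ : ℂ) - fc n) = (δ : ℂ) := by ring
        rw [heq, hδnorm]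
    have hge : (N : ℝ) * δ ^ p₀ ≤ ∑ n ∈ Finset.range N, ‖(g : ∀ _ : ℕ, ℂ) n‖ ^ p₀ := by
      calc (N : ℝ) * δ ^ p₀ = ∑ _n ∈ Finset.range N, δ ^ p₀ := by
            simp [Finset.sum_const, nsmul_eq_mul]
        _ ≤ ∑ n ∈ Finset.range N, ‖(g : ∀ _ : ℕ, ℂ) n‖ ^ p₀ :=
            Finset.sum_le_sum fun n hn =>
              Real.rpow_le_rpow hδ.le (hlow n (Finset.mem_range.1 hn)) hp₀.le
    have := hgmem (Finset.range N)
    linarith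
  · -- coverage
    intro f hf
    have hs : Summable fun n : ℕ => ‖(f : ∀ _ : ℕ, ℂ) n‖ ^ p₀ := hf p₀ hap₀
    refine Set.mem_iUnion.2 ⟨⌈∑' n : ℕ, ‖(f : ∀ _ : ℕ, ℂ) n‖ ^ p₀⌉₊, fun F => ?_⟩
    exact (Summable.sum_le_tsum F (fun n _ => Real.rpow_nonneg (norm_nonneg _) _) hs).trans
      (Nat.le_ceil _)
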